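/- Let φ be C^{d} on an interval, with φ^{(d−2)}, φ^{(d−1)} defined near [t, t+h], h > 0, and φ^{(d−1)} nondecreasing. Let E be the parallelogram in ℝ² with vertices P_1 = (t, φ^{(d−2)}(t)), P_2 = P_1 − ρ e_2, P_3 = (t+h, φ^{(d−2)}(t+h)), P_4 = P_3 + ρ e_2, where ρ = h φ^{(d−1)}(t+h) + φ^{(d−2)}(t) − φ^{(d−2)}(t+h) ≥ 0. Then the two-dimensional Lebesgue measure of E satisfies m_2(E) ≤ h² (φ^{(d−1)}(t+h) − φ^{(d−1)}(t)), and the arc {(s, φ^{(d−2)}(s)) : t ≤ s ≤ t+h} is contained in E. -/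

import Mathlib

open MeasureTheory

private lemma iterDW_eq_iterD {f : ℝ → ℝ} {s : Set ℝ} {x : ℝ} (n : ℕ) (hs : IsOpen s)
    (hx : x ∈ s) : iteratedDerivWithin n f s x = iteratedDeriv n f x := by
  unfold iteratedDerivWithin iteratedDeriv
  rw [iteratedFDerivWithin_of_isOpen n hs hx]

private lemma hasDerivAt_iter {d : ℕ} (hd : 2 ≤ d) {φ : ℝ → ℝ} {A B : ℝ}
    (hφ : ContDiffOn ℝ d φ (Set.Ioo A B)) {x : ℝ} (hx : x ∈ Set.Ioo A B) :
    HasDerivAt (iteratedDeriv (d - 2) φ) (iteratedDeriv (d - 1) φ x) x := by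
  have hs : IsOpen (Set.Ioo A B) := isOpen_Ioo
  have hnx : Set.Ioo A B ∈ nhds x := hs.mem_nhds hx
  have hu : UniqueDiffOn ℝ (Set.Ioo A B) := hs.uniqueDiffOn
  have hlt : ((d - 2 : ℕ) : WithTop ℕ∞) < (d : WithTop ℕ∞) := by
    exact_mod_cast (by omega : d - 2 < d)
  have hdiff : DifferentiableOn ℝ (iteratedDerivWithin (d - 2) φ (Set.Ioo A B)) (Set.Ioo A B) :=
    hφ.differentiableOn_iteratedDerivWithin hlt hu
  have h1 : HasDerivAt (iteratedDerivWithin (d - 2) φ (Set.Ioo A B))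
      (deriv (iteratedDerivWithin (d - 2) φ (Set.Ioo A B)) x) x :=
    ((hdiff x hx).differentiableAt hnx).hasDerivAt
  have h2 : deriv (iteratedDerivWithin (d - 2) φ (Set.Ioo A B)) x
      = iteratedDeriv (d - 1) φ x := by
    rw [← derivWithin_of_isOpen hs hx, ← iteratedDerivWithin_succ,
      (by omega : d - 2 + 1 = d - 1), iterDW_eq_iterD _ hs hx]
  rw [h2] at h1
  have heq : iteratedDeriv (d - 2) φ =ᶠ[nhds x] iteratedDerivWithin (d - 2) φ (Set.Ioo A B) :=
    Filter.eventuallyEq_of_mem hnx fun y hy => (iterDW_eq_iterD _ hs hy).symm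
  exact h1.congr_of_eventuallyEq heq

private lemma vert_segment {s a b y : ℝ} (hay : a ≤ y) (hyb : y ≤ b) :
    ((s, y) : ℝ × ℝ) ∈ segment ℝ (s, a) (s, b) := by
  have hy : y ∈ segment ℝ a b := by
    rw [segment_eq_Icc (hay.trans hyb)]; exact ⟨hay, hyb⟩
  obtain ⟨u, v, hu, hv, huv, hval⟩ := hy
  exact ⟨u, v, hu, hv, huv, by
    simp only [Prod.smul_mk, smul_eq_mul, Prod.mk_add_mk, Prod.mk.injEq]
    constructor
    · linear_combination s * huv
    · exact hval⟩

/-- with `f = φ^{(d-2)}`, `f' = φ^{(d-1)}` nondecreasing, the parallelogram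
`E` with vertices `P₁ = (t, f t)`, `P₂ = P₁ - ρ e₂`, `P₃ = (t+h, f (t+h))`,
`P₄ = P₃ + ρ e₂`, where `ρ = h f'(t+h) + f t - f (t+h)`, satisfies `ρ ≥ 0`,
`m₂(E) ≤ h² (f'(t+h) - f'(t))`, and contains the arc `{(s, f s) : t ≤ s ≤ t+h}`. -/
theorem stmt15 (d : ℕ) (hd : 2 ≤ d) (φ : ℝ → ℝ) (A B t h : ℝ) (hh : 0 < h)
    (hsub : Set.Icc t (t + h) ⊆ Set.Ioo A B)
    (hφ : ContDiffOn ℝ d φ (Set.Ioo A B))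
    (hmono : MonotoneOn (iteratedDeriv (d - 1) φ) (Set.Ioo A B)) :
    let f := iteratedDeriv (d - 2) φ
    let f' := iteratedDeriv (d - 1) φ
    let ρ := h * f' (t + h) + f t - f (t + h)
    let E := convexHull ℝ
      ({(t, f t), (t, f t - ρ), (t + h, f (t + h)), (t + h, f (t + h) + ρ)} :
        Set (ℝ × ℝ))
    0 ≤ ρ ∧
      volume E ≤ ENNReal.ofReal (h ^ 2 * (f' (t + h) - f' t)) ∧
      ∀ s ∈ Set.Icc t (t + h), (s, f s) ∈ E := by
  intro f f' ρ E
  have hder : ∀ x ∈ Set.Icc t (t + h), HasDerivAt f (f' x) x :=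
    fun x hx => hasDerivAt_iter hd hφ (hsub hx)
  have htm : t ∈ Set.Icc t (t + h) := by constructor <;> linarith
  have hthm : t + h ∈ Set.Icc t (t + h) := by constructor <;> linarith
  -- the key slope bound
  have slope_le : ∀ a b : ℝ, t ≤ a → a ≤ b → b ≤ t + h → f b - f a ≤ (b - a) * f' (t + h) := by
    intro a b hta hab hbth
    rcases eq_or_lt_of_le hab with rfl | hab'
    · simp
    · have hcont : ContinuousOn f (Set.Icc a b) := fun x hx =>
        ((hder x ⟨hta.trans hx.1, hx.2.trans hbth⟩).continuousAt).continuousWithinAt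
      obtain ⟨c, hc, hceq⟩ := exists_hasDerivAt_eq_slope f f' hab'
        hcont (fun x hx => hder x ⟨hta.trans hx.1.le, hx.2.le.trans hbth⟩)
      have hcle : f' c ≤ f' (t + h) := hmono
        (hsub ⟨hta.trans hc.1.le, hc.2.le.trans hbth⟩) (hsub hthm) (hc.2.le.trans hbth)
      rw [eq_div_iff (by linarith : b - a ≠ 0)] at hceq
      have : f b - f a = (b - a) * f' c := by linear_combination -hceq
      rw [this]
      exact mul_le_mul_of_nonneg_left hcle (by linarith)
  have slope_ge : h * f' t ≤ f (t + h) - f t := by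
    have hcont : ContinuousOn f (Set.Icc t (t + h)) := fun x hx =>
      ((hder x hx).continuousAt).continuousWithinAt
    obtain ⟨c, hc, hceq⟩ := exists_hasDerivAt_eq_slope f f' (by linarith)
      hcont (fun x hx => hder x ⟨hx.1.le, hx.2.le⟩)
    have hcge : f' t ≤ f' c := hmono (hsub htm)
      (hsub ⟨hc.1.le, hc.2.le⟩) hc.1.le
    rw [eq_div_iff (by linarith : t + h - t ≠ 0)] at hceq
    nlinarith [hceq]
  have hρdef : ρ = h * f' (t + h) + f t - f (t + h) := rfl
  have hρ : 0 ≤ ρ := by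
    have := slope_le t (t + h) le_rfl (by linarith) le_rfl
    simp only [add_sub_cancel_left] at this
    linarith [hρdef]
  have hρle : ρ ≤ h * (f' (t + h) - f' t) := by nlinarith [slope_ge, hρdef]
  refine ⟨hρ, ?_, ?_⟩
  · -- volume bound
    set S : Set (ℝ × ℝ) := {p : ℝ × ℝ | t ≤ p.1 ∧ p.1 ≤ t + h ∧
        f t - ρ + (p.1 - t) * f' (t + h) ≤ p.2 ∧ p.2 ≤ f t + (p.1 - t) * f' (t + h)}
      with hS
    have hconv : Convex ℝ S := by
      have l1 : IsLinearMap ℝ (fun p : ℝ × ℝ => p.1) := ⟨fun _ _ => rfl, fun _ _ => rfl⟩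
      have l2 : IsLinearMap ℝ (fun p : ℝ × ℝ => p.2 - f' (t + h) * p.1) :=
        ⟨fun p q => by simp [Prod.fst_add, Prod.snd_add]; ring,
         fun c p => by simp [smul_eq_mul]; ring⟩
      have hSeq : S = {p : ℝ × ℝ | t ≤ p.1} ∩ {p : ℝ × ℝ | p.1 ≤ t + h}
          ∩ ({p : ℝ × ℝ | f t - ρ - t * f' (t + h) ≤ p.2 - f' (t + h) * p.1}
            ∩ {p : ℝ × ℝ | p.2 - f' (t + h) * p.1 ≤ f t - t * f' (t + h)}) := by
        ext p
        simp only [hS, Set.mem_setOf_eq, Set.mem_inter_iff]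
        constructor
        · rintro ⟨h1, h2, h3, h4⟩; exact ⟨⟨h1, h2⟩, ⟨by linarith, by linarith⟩⟩
        · rintro ⟨⟨h1, h2⟩, ⟨h3, h4⟩⟩; exact ⟨h1, h2, by linarith, by linarith⟩
      rw [hSeq]
      exact ((convex_halfSpace_ge l1 t).inter (convex_halfSpace_le l1 (t + h))).inter
        ((convex_halfSpace_ge l2 _).inter (convex_halfSpace_le l2 _))
    have hES : E ⊆ S := by
      apply convexHull_min _ hconv
      intro p hp
      simp only [Set.mem_insert_iff, Set.mem_singleton_iff] at hp
      rcases hp with rfl | rfl | rfl | rfl <;>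
        simp only [hS, Set.mem_setOf_eq] <;>
        refine ⟨by linarith, by linarith, by nlinarith [hρdef], by nlinarith [hρdef]⟩
    have hSclosed : IsClosed S := by
      have c1 : Continuous fun p : ℝ × ℝ => p.1 := continuous_fst
      have c2 : Continuous fun p : ℝ × ℝ => p.2 := continuous_snd
      have cg : Continuous fun p : ℝ × ℝ => f t - ρ + (p.1 - t) * f' (t + h) := by fun_prop
      have cg2 : Continuous fun p : ℝ × ℝ => f t + (p.1 - t) * f' (t + h) := by fun_prop
      exact (isClosed_le continuous_const c1).inter ((isClosed_le c1 continuous_const).inter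
        ((isClosed_le cg c2).inter (isClosed_le c2 cg2)))
    have hvolS : volume S = ENNReal.ofReal ρ * ENNReal.ofReal h := by
      rw [Measure.volume_eq_prod, Measure.prod_apply hSclosed.measurableSet]
      have hslice : ∀ x : ℝ, volume (Prod.mk x ⁻¹' S)
          = Set.indicator (Set.Icc t (t + h)) (fun _ => ENNReal.ofReal ρ) x := by
        intro x
        by_cases hx : x ∈ Set.Icc t (t + h)
        · have hpre : Prod.mk x ⁻¹' S
              = Set.Icc (f t - ρ + (x - t) * f' (t + h)) (f t + (x - t) * f' (t + h)) := by
            ext y; simp [hS, Set.mem_Icc, hx.1, hx.2]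
          rw [hpre, Real.volume_Icc, Set.indicator_of_mem hx]
          congr 1; ring_nf
        · have hpre : Prod.mk x ⁻¹' S = ∅ := by
            ext y
            simp only [Set.mem_preimage, hS, Set.mem_setOf_eq, Set.mem_empty_iff_false,
              iff_false]
            rintro ⟨h1, h2, -⟩
            exact hx ⟨h1, h2⟩
          rw [hpre, measure_empty, Set.indicator_of_notMem hx]
      simp_rw [hslice]
      rw [lintegral_indicator measurableSet_Icc, lintegral_const,
        Measure.restrict_apply MeasurableSet.univ, Set.univ_inter, Real.volume_Icc]
      congr 1; ring_nf
    calc volume E ≤ volume S := measure_mono hES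
      _ = ENNReal.ofReal ρ * ENNReal.ofReal h := hvolS
      _ = ENNReal.ofReal (ρ * h) := (ENNReal.ofReal_mul hρ).symm
      _ ≤ ENNReal.ofReal (h ^ 2 * (f' (t + h) - f' t)) := by
          apply ENNReal.ofReal_le_ofReal; nlinarith
  · -- arc containment
    intro s hs
    have hst : t ≤ s := hs.1
    have hsth : s ≤ t + h := hs.2
    set u : ℝ := (s - t) / h with hu
    have hu0 : 0 ≤ u := div_nonneg (by linarith) hh.le
    have hu1 : u ≤ 1 := by rw [div_le_one hh]; linarith
    have huh : u * h = s - t := div_mul_cancel₀ _ hh.ne'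
    -- bottom and top points
    have hbot : ((s, f t - ρ + (s - t) * f' (t + h)) : ℝ × ℝ)
        ∈ segment ℝ (t, f t - ρ) (t + h, f (t + h)) := by
      refine ⟨1 - u, u, by linarith, hu0, by ring, ?_⟩
      simp only [Prod.smul_mk, smul_eq_mul, Prod.mk_add_mk, Prod.mk.injEq]
      have hfeq : f (t + h) = f t - ρ + h * f' (t + h) := by rw [hρdef]; ring
      constructor
      · linear_combination huh
      · rw [hfeq]; linear_combination (f' (t + h)) * huh
    have htop : ((s, f t + (s - t) * f' (t + h)) : ℝ × ℝ)
        ∈ segment ℝ (t, f t) (t + h, f (t + h) + ρ) := by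
      refine ⟨1 - u, u, by linarith, hu0, by ring, ?_⟩
      simp only [Prod.smul_mk, smul_eq_mul, Prod.mk_add_mk, Prod.mk.injEq]
      have hfeq : f (t + h) + ρ = f t + h * f' (t + h) := by rw [hρdef]; ring
      constructor
      · linear_combination huh
      · rw [hfeq]; linear_combination (f' (t + h)) * huh
    have hupper : f s ≤ f t + (s - t) * f' (t + h) := by
      have := slope_le t s le_rfl hst hsth; linarith
    have hlower : f t - ρ + (s - t) * f' (t + h) ≤ f s := by
      have := slope_le s (t + h) hst hsth le_rfl
      nlinarith [hρdef]
    have hseg : ((s, f s) : ℝ × ℝ) ∈ segment ℝ (s, f t - ρ + (s - t) * f' (t + h))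
        (s, f t + (s - t) * f' (t + h)) := vert_segment hlower hupper
    have hEc : Convex ℝ E := convex_convexHull ℝ _
    have hsubE : ({(t, f t), (t, f t - ρ), (t + h, f (t + h)), (t + h, f (t + h) + ρ)} :
        Set (ℝ × ℝ)) ⊆ E := subset_convexHull ℝ _
    have hbotE : ((s, f t - ρ + (s - t) * f' (t + h)) : ℝ × ℝ) ∈ E :=
      hEc.segment_subset (hsubE (by simp)) (hsubE (by simp)) hbot
    have htopE : ((s, f t + (s - t) * f' (t + h)) : ℝ × ℝ) ∈ E :=
      hEc.segment_subset (hsubE (by simp)) (hsubE (by simp)) htop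
    exact hEc.segment_subset hbotE htopE hseg
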